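/- arXiv:2104.07443 — 4 statements merged into one kernel-verified Lean document; each statement's English description precedes it below -/
import Mathlib

section
/- Let f : ℕ → ℂ be an additive arithmetic function (i.e. f(mn) = f(m) + f(n) whenever gcd(m,n) = 1, so in particular f(1) = 0), let k ≥ 1 be an integer and let n₁, …, n_k be positive integers. Then f(lcm(n₁,…,n_k)) = Σ_{j=1}^{k} (−1)^{j−1} Σ_{1 ≤ i₁ < ⋯ < i_j ≤ k} f(gcd(n_{i₁},…,n_{i_j})); equivalently, f of the lcm equals the sum over all nonempty subsets S of {1,…,k} of (−1)^{|S|−1} · f(gcd of the n_i with i ∈ S). -/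
section
variable {f : ℕ → ℂ}

lemma myf_one (hf : ∀ m n : ℕ, Nat.Coprime m n → f (m * n) = f m + f n) : f 1 = 0 := by
  have := hf 1 1 (by norm_num)
  simpa using this.symm

lemma myf_prod (hf : ∀ m n : ℕ, Nat.Coprime m n → f (m * n) = f m + f n)
    {ι : Type*} (s : Finset ι) (g : ι → ℕ)
    (hcop : ∀ i ∈ s, ∀ j ∈ s, i ≠ j → Nat.Coprime (g i) (g j)) :
    f (∏ i ∈ s, g i) = ∑ i ∈ s, f (g i) := by
  induction s using Finset.cons_induction with
  | empty => simpa using myf_one hf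
  | cons a s ha ih =>
    rw [Finset.prod_cons, Finset.sum_cons]
    have hc : Nat.Coprime (g a) (∏ i ∈ s, g i) :=
      Nat.Coprime.prod_right fun i hi =>
        hcop a (Finset.mem_cons_self a s) i (Finset.mem_cons_of_mem hi)
          (by rintro rfl; exact ha hi)
    rw [hf _ _ hc, ih fun i hi j hj hij =>
      hcop i (Finset.mem_cons_of_mem hi) j (Finset.mem_cons_of_mem hj) hij]

lemma myf_factor (hf : ∀ m n : ℕ, Nat.Coprime m n → f (m * n) = f m + f n)
    {m : ℕ} (hm : m ≠ 0) :
    f m = ∑ p ∈ m.primeFactors, f (p ^ m.factorization p) := by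
  conv_lhs => rw [← Nat.factorization_prod_pow_eq_self hm]
  rw [Finsupp.prod, Nat.support_factorization]
  exact myf_prod hf _ _ fun p hp q hq hpq =>
    Nat.Coprime.pow _ _ ((Nat.coprime_primes (Nat.prime_of_mem_primeFactors hp)
      (Nat.prime_of_mem_primeFactors hq)).mpr hpq)

lemma myf_dvd (hf : ∀ m n : ℕ, Nat.Coprime m n → f (m * n) = f m + f n)
    {m N : ℕ} (hm : m ≠ 0) (hN : N ≠ 0) (hd : m ∣ N) :
    f m = ∑ p ∈ N.primeFactors, f (p ^ m.factorization p) := by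
  rw [myf_factor hf hm]
  refine Finset.sum_subset (Nat.primeFactors_mono hd hN) fun p _ hp => ?_
  have : m.factorization p = 0 := by
    rwa [← Finsupp.notMem_support_iff, Nat.support_factorization]
  rw [this, pow_zero, myf_one hf]

lemma myf_lcm_gcd (hf : ∀ m n : ℕ, Nat.Coprime m n → f (m * n) = f m + f n)
    {a b : ℕ} (ha : a ≠ 0) (hb : b ≠ 0) :
    f (Nat.lcm a b) + f (Nat.gcd a b) = f a + f b := by
  have hl : Nat.lcm a b ≠ 0 := Nat.lcm_ne_zero ha hb
  have hg : Nat.gcd a b ≠ 0 := Nat.gcd_ne_zero_left ha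
  rw [myf_dvd hf ha hl (Nat.dvd_lcm_left a b), myf_dvd hf hb hl (Nat.dvd_lcm_right a b),
    myf_dvd hf hl hl dvd_rfl,
    myf_dvd hf hg hl ((Nat.gcd_dvd_left a b).trans (Nat.dvd_lcm_left a b)),
    ← Finset.sum_add_distrib, ← Finset.sum_add_distrib]
  refine Finset.sum_congr rfl fun p _ => ?_
  rw [Nat.factorization_lcm ha hb, Nat.factorization_gcd ha hb,
    Finsupp.sup_apply, Finsupp.inf_apply]
  rcases le_total (a.factorization p) (b.factorization p) with h | h
  · rw [sup_eq_right.mpr h, inf_eq_left.mpr h, add_comm]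
  · rw [sup_eq_left.mpr h, inf_eq_right.mpr h]

end

section distrib

lemma my_nat_gcd_ne_zero {a b : ℕ} (ha : a ≠ 0) : Nat.gcd a b ≠ 0 :=
  fun h => ha (Nat.eq_zero_of_gcd_eq_zero_left h)

lemma my_gcd_lcm_distrib {a b c : ℕ} (ha : a ≠ 0) (hb : b ≠ 0) (hc : c ≠ 0) :
    Nat.gcd (Nat.lcm a b) c = Nat.lcm (Nat.gcd a c) (Nat.gcd b c) := by
  have hl : Nat.lcm a b ≠ 0 := Nat.lcm_ne_zero ha hb
  have h1 : Nat.gcd a c ≠ 0 := my_nat_gcd_ne_zero ha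
  have h2 : Nat.gcd b c ≠ 0 := my_nat_gcd_ne_zero hb
  refine Nat.factorization_inj (my_nat_gcd_ne_zero hl) (Nat.lcm_ne_zero h1 h2) ?_
  rw [Nat.factorization_gcd hl hc, Nat.factorization_lcm ha hb,
    Nat.factorization_lcm h1 h2, Nat.factorization_gcd ha hc, Nat.factorization_gcd hb hc]
  ext p
  simp only [Finsupp.inf_apply, Finsupp.sup_apply]
  exact inf_sup_right _ _ _

lemma my_finset_lcm_ne_zero {ι : Type*} {s : Finset ι} {n : ι → ℕ}
    (hn : ∀ i ∈ s, n i ≠ 0) : s.lcm n ≠ 0 := by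
  rw [Ne, Finset.lcm_eq_zero_iff]
  rintro ⟨i, hi, h⟩
  exact hn i hi h

lemma my_finset_gcd_ne_zero {ι : Type*} {s : Finset ι} {n : ι → ℕ}
    (hs : s.Nonempty) (hn : ∀ i ∈ s, n i ≠ 0) : s.gcd n ≠ 0 := by
  rw [Ne, Finset.gcd_eq_zero_iff]
  obtain ⟨i, hi⟩ := hs
  exact fun h => hn i hi (h i hi)

lemma my_gcd_const {ι : Type*} {s : Finset ι} (hs : s.Nonempty) (n : ι → ℕ) (m : ℕ) :
    s.gcd (fun i => Nat.gcd (n i) m) = Nat.gcd (s.gcd n) m := by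
  induction hs using Finset.Nonempty.cons_induction with
  | singleton a => simp [Finset.gcd_singleton]
  | cons a s ha hs ih =>
    classical
    rw [Finset.cons_eq_insert, Finset.gcd_insert, Finset.gcd_insert, ih]
    show Nat.gcd (Nat.gcd (n a) m) (Nat.gcd (s.gcd n) m) = Nat.gcd (Nat.gcd (n a) (s.gcd n)) m
    rw [Nat.gcd_assoc, Nat.gcd_assoc, Nat.gcd_comm m, Nat.gcd_assoc, Nat.gcd_self]

lemma my_lcm_gcd_distrib {ι : Type*} {s : Finset ι} (hs : s.Nonempty) {n : ι → ℕ} {m : ℕ}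
    (hn : ∀ i ∈ s, n i ≠ 0) (hm : m ≠ 0) :
    Nat.gcd (s.lcm n) m = s.lcm (fun i => Nat.gcd (n i) m) := by
  induction hs using Finset.Nonempty.cons_induction with
  | singleton a => simp [Finset.lcm_singleton]
  | cons a s ha hs ih =>
    classical
    rw [Finset.cons_eq_insert, Finset.lcm_insert, Finset.lcm_insert]
    show Nat.gcd (Nat.lcm (n a) (s.lcm n)) m = Nat.lcm (Nat.gcd (n a) m) (s.lcm fun i => Nat.gcd (n i) m)
    rw [my_gcd_lcm_distrib (hn a (Finset.mem_cons_self a s))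
      (my_finset_lcm_ne_zero fun i hi => hn i (Finset.mem_cons_of_mem hi)) hm,
      ih fun i hi => hn i (Finset.mem_cons_of_mem hi)]

end distrib

lemma my_aux {f : ℕ → ℂ} {ι : Type*} [DecidableEq ι]
    (hf : ∀ m n : ℕ, Nat.Coprime m n → f (m * n) = f m + f n)
    (s : Finset ι) (hs : s.Nonempty) :
    ∀ (n : ι → ℕ), (∀ i ∈ s, n i ≠ 0) →
      f (s.lcm n) = ∑ S ∈ s.powerset.filter (fun S => S.Nonempty),
        (-1 : ℂ) ^ (S.card - 1) * f (S.gcd n) := by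
  induction hs using Finset.Nonempty.cons_induction with
  | singleton a =>
    intro n hn
    have h1 : ({a} : Finset ι).powerset.filter (fun S => S.Nonempty) = {{a}} := by
      ext S
      simp only [Finset.mem_filter, Finset.mem_powerset, Finset.subset_singleton_iff,
        Finset.mem_singleton, Finset.nonempty_iff_ne_empty]
      constructor
      · rintro ⟨h | h, h2⟩
        exacts [absurd h h2, h]
      · rintro rfl
        exact ⟨Or.inr rfl, Finset.singleton_ne_empty a⟩
    rw [h1, Finset.sum_singleton]
    simp [Finset.lcm_singleton, Finset.gcd_singleton]
  | cons a s ha hs ih =>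
    intro n hn
    have hna : n a ≠ 0 := hn a (Finset.mem_cons_self a s)
    have hns : ∀ i ∈ s, n i ≠ 0 := fun i hi => hn i (Finset.mem_cons_of_mem hi)
    have hL : s.lcm n ≠ 0 := my_finset_lcm_ne_zero hns
    set b : ι → ℕ := fun i => Nat.gcd (n i) (n a) with hb
    have hbs : ∀ i ∈ s, b i ≠ 0 := fun i hi => my_nat_gcd_ne_zero (hns i hi)
    rw [Finset.cons_eq_insert, Finset.sum_filter, Finset.sum_powerset_insert ha]
    -- first sum
    have e1 : (∑ T ∈ s.powerset, if T.Nonempty then (-1 : ℂ) ^ (T.card - 1) * f (T.gcd n) else 0)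
        = f (s.lcm n) := by
      rw [← Finset.sum_filter, ← ih n hns]
    -- second sum: split empty / nonempty
    have e2 : (∑ T ∈ s.powerset,
          if (insert a T).Nonempty then
            (-1 : ℂ) ^ ((insert a T).card - 1) * f ((insert a T).gcd n) else 0)
        = f (n a) - f (Nat.gcd (s.lcm n) (n a)) := by
      rw [← Finset.sum_filter_add_sum_filter_not s.powerset (fun T => T.Nonempty)]
      have hempty : s.powerset.filter (fun T => ¬ T.Nonempty) = {∅} := by
        ext T
        simp only [Finset.mem_filter, Finset.mem_powerset, Finset.not_nonempty_iff_eq_empty,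
          Finset.mem_singleton]
        constructor
        · exact fun h => h.2
        · rintro rfl
          exact ⟨Finset.empty_subset s, rfl⟩
      have e3 : (∑ T ∈ s.powerset.filter (fun T => ¬ T.Nonempty),
            if (insert a T).Nonempty then
              (-1 : ℂ) ^ ((insert a T).card - 1) * f ((insert a T).gcd n) else 0)
          = f (n a) := by
        rw [hempty, Finset.sum_singleton, if_pos (Finset.insert_nonempty a ∅)]
        simp only [Finset.insert_empty, Finset.card_singleton, Finset.gcd_singleton]
        show (-1 : ℂ) ^ (1 - 1) * f (normalize (n a)) = f (n a)
        simp
      have e4 : (∑ T ∈ s.powerset.filter (fun T => T.Nonempty),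
            if (insert a T).Nonempty then
              (-1 : ℂ) ^ ((insert a T).card - 1) * f ((insert a T).gcd n) else 0)
          = - f (Nat.gcd (s.lcm n) (n a)) := by
        have step : ∀ T ∈ s.powerset.filter (fun T => T.Nonempty),
            (if (insert a T).Nonempty then
              (-1 : ℂ) ^ ((insert a T).card - 1) * f ((insert a T).gcd n) else 0)
            = -((-1 : ℂ) ^ (T.card - 1) * f (T.gcd b)) := by
          intro T hT
          rw [Finset.mem_filter, Finset.mem_powerset] at hT
          obtain ⟨hTs, hTne⟩ := hT
          have haT : a ∉ T := fun h => ha (hTs h)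
          rw [if_pos (Finset.insert_nonempty a T), Finset.card_insert_of_notMem haT,
            Nat.add_sub_cancel, Finset.gcd_insert]
          have harg : GCDMonoid.gcd (n a) (T.gcd n) = T.gcd b := by
            show Nat.gcd (n a) (T.gcd n) = T.gcd b
            rw [hb, my_gcd_const hTne n (n a), Nat.gcd_comm]
          rw [harg]
          obtain ⟨m, hm⟩ : ∃ m, T.card = m + 1 :=
            ⟨T.card - 1, (Nat.succ_pred_eq_of_pos (Finset.card_pos.mpr hTne)).symm⟩
          rw [hm, Nat.add_sub_cancel]
          ring
        rw [Finset.sum_congr rfl step, Finset.sum_neg_distrib, ← ih b hbs,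
          my_lcm_gcd_distrib hs hns hna]
      rw [e3, e4]; ring
    rw [e1, e2]
    have hlcm : (insert a s).lcm n = Nat.lcm (n a) (s.lcm n) := by
      rw [Finset.lcm_insert]; rfl
    rw [hlcm]
    have key := myf_lcm_gcd hf hna hL
    rw [Nat.gcd_comm (s.lcm n) (n a)]
    linear_combination key

/-- **Inclusion-exclusion identity for additive arithmetic functions.**
If `f : ℕ → ℂ` is additive (i.e. `f (m * n) = f m + f n` whenever `gcd m n = 1`),
`k ≥ 1` and `n₁, …, n_k` are positive integers, then `f` of the lcm of the `nᵢ`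
equals the alternating sum, over all nonempty subsets `S` of `{1, …, k}`, of
`(-1)^(|S|-1) * f (gcd of the nᵢ, i ∈ S)`. -/
theorem stmt_0 (f : ℕ → ℂ)
    (hf : ∀ m n : ℕ, Nat.Coprime m n → f (m * n) = f m + f n)
    (k : ℕ) (hk : 1 ≤ k) (n : Fin k → ℕ) (hn : ∀ i, 1 ≤ n i) :
    f (Finset.univ.lcm n) =
      ∑ S ∈ Finset.univ.powerset.filter (fun S : Finset (Fin k) => S.Nonempty),
        (-1 : ℂ) ^ (S.card - 1) * f (S.gcd n) := by
  have : Nonempty (Fin k) := ⟨⟨0, hk⟩⟩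
  exact my_aux hf Finset.univ Finset.univ_nonempty n
    fun i _ => Nat.one_le_iff_ne_zero.mp (hn i)
end

section
/- Let g : ℕ → ℂ be a multiplicative arithmetic function with g(n) ≠ 0 for all n ≥ 1, let k ≥ 1 be an integer and let n₁, …, n_k be positive integers. Then g(lcm(n₁,…,n_k)) = ∏_{j=1}^{k} ( ∏_{1 ≤ i₁ < ⋯ < i_j ≤ k} g(gcd(n_{i₁},…,n_{i_j})) )^{(−1)^{j−1}}; equivalently, g(lcm(n₁,…,n_k)) · ∏_{S ⊆ {1,…,k}, |S| even, S ≠ ∅} g(gcd_{i∈S} n_i) = ∏_{S ⊆ {1,…,k}, |S| odd} g(gcd_{i∈S} n_i). -/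
open Finset

private lemma gcd_mul_lcm_g (g : ℕ → ℂ) (hg1 : g 1 = 1)
    (hg : ∀ m n : ℕ, Nat.Coprime m n → g (m * n) = g m * g n)
    (a b : ℕ) (ha : a ≠ 0) (hb : b ≠ 0) :
    g (Nat.lcm a b) * g (Nat.gcd a b) = g a * g b := by
  have hlcm : Nat.lcm a b ≠ 0 := Nat.lcm_ne_zero ha hb
  have hgcd : Nat.gcd a b ≠ 0 := Nat.gcd_ne_zero_left ha
  rw [Nat.multiplicative_factorization g hg hg1 hlcm,
      Nat.multiplicative_factorization g hg hg1 hgcd,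
      Nat.multiplicative_factorization g hg hg1 ha,
      Nat.multiplicative_factorization g hg hg1 hb,
      Nat.factorization_lcm ha hb, Nat.factorization_gcd ha hb]
  set fa := a.factorization
  set fb := b.factorization
  set t := fa.support ∪ fb.support with ht
  have h0 : ∀ p ∈ t, g (p ^ (0:ℕ)) = 1 := fun p _ => by simp [hg1]
  rw [Finsupp.prod_of_support_subset (fa ⊔ fb) (by rw [Finsupp.support_sup]) _ h0,
      Finsupp.prod_of_support_subset (fa ⊓ fb) (s := t)
        ((by rw [Finsupp.support_inf]; exact Finset.inter_subset_left :
          (fa ⊓ fb).support ⊆ fa.support) |>.trans subset_union_left) _ h0,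
      Finsupp.prod_of_support_subset fa subset_union_left _ h0,
      Finsupp.prod_of_support_subset fb subset_union_right _ h0,
      ← Finset.prod_mul_distrib, ← Finset.prod_mul_distrib]
  refine Finset.prod_congr rfl fun p _ => ?_
  rw [Finsupp.sup_apply, Finsupp.inf_apply]
  rcases le_total (fa p) (fb p) with h | h
  · rw [max_eq_right h, min_eq_left h, mul_comm]
  · rw [max_eq_left h, min_eq_right h]

private lemma nat_gcd_lcm_distrib (a b c : ℕ) (ha : a ≠ 0) (hb : b ≠ 0) (hc : c ≠ 0) :
    Nat.gcd (Nat.lcm a b) c = Nat.lcm (Nat.gcd a c) (Nat.gcd b c) := by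
  have h1 : Nat.lcm a b ≠ 0 := Nat.lcm_ne_zero ha hb
  have h2 : Nat.gcd a c ≠ 0 := Nat.gcd_ne_zero_left ha
  have h3 : Nat.gcd b c ≠ 0 := Nat.gcd_ne_zero_left hb
  apply Nat.factorization_inj (by simp [Nat.gcd_ne_zero_right hc])
    (by simp [Nat.lcm_ne_zero h2 h3])
  rw [Nat.factorization_gcd h1 hc, Nat.factorization_lcm ha hb,
      Nat.factorization_lcm h2 h3, Nat.factorization_gcd ha hc, Nat.factorization_gcd hb hc]
  ext p
  simp only [Finsupp.inf_apply, Finsupp.sup_apply]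
  exact inf_sup_right _ _ _

section FinsetLemmas

variable {ι : Type*} [DecidableEq ι]

private lemma finset_gcd_gcd (s : Finset ι) (hs : s.Nonempty) (f : ι → ℕ) (m : ℕ) :
    s.gcd (fun i => Nat.gcd (f i) m) = Nat.gcd (s.gcd f) m := by
  induction hs using Finset.Nonempty.cons_induction with
  | singleton a => simp
  | cons a s ha hs ih =>
    rw [Finset.cons_eq_insert, Finset.gcd_insert, Finset.gcd_insert, ih]
    show Nat.gcd (Nat.gcd (f a) m) (Nat.gcd (s.gcd f) m) = Nat.gcd (Nat.gcd (f a) (s.gcd f)) m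
    rw [Nat.gcd_assoc (f a) m, Nat.gcd_comm m (Nat.gcd (s.gcd f) m),
      Nat.gcd_assoc (s.gcd f) m m, Nat.gcd_self, ← Nat.gcd_assoc]

omit [DecidableEq ι] in
private lemma finset_lcm_ne_zero (s : Finset ι) (n : ι → ℕ) (hn : ∀ i, n i ≠ 0) :
    s.lcm n ≠ 0 := by
  rw [Ne, Finset.lcm_eq_zero_iff]
  rintro ⟨i, -, h⟩
  exact hn i h

private lemma finset_gcd_lcm_distrib (s : Finset ι) (n : ι → ℕ) (m : ℕ)
    (hn : ∀ i, n i ≠ 0) (hm : m ≠ 0) :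
    Nat.gcd (s.lcm n) m = s.lcm (fun i => Nat.gcd (n i) m) := by
  induction s using Finset.induction with
  | empty => simp [Nat.gcd_one_left]
  | insert a s ha ih =>
    rw [Finset.lcm_insert, Finset.lcm_insert]
    show Nat.gcd (Nat.lcm (n a) (s.lcm n)) m = Nat.lcm (Nat.gcd (n a) m) (s.lcm _)
    rw [nat_gcd_lcm_distrib _ _ _ (hn a) (finset_lcm_ne_zero s n hn) hm, ← ih]

private lemma prod_powerset_insert_filter (f : Finset ι → ℂ) (P : Finset ι → Prop)
    [DecidablePred P] (a : ι) (s : Finset ι) (ha : a ∉ s) :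
    ∏ S ∈ (insert a s).powerset.filter P, f S =
      (∏ S ∈ s.powerset.filter P, f S) *
      ∏ S ∈ s.powerset.filter (fun S => P (insert a S)), f (insert a S) := by
  have disj : Disjoint (s.powerset.filter P) (((s.powerset.image (insert a)).filter P)) := by
    rw [Finset.disjoint_left]
    intro S hS hS'
    have h1 : a ∉ S := fun h => ha (Finset.mem_powerset.mp (Finset.mem_filter.mp hS).1 h)
    obtain ⟨T, -, rfl⟩ := Finset.mem_image.mp (Finset.mem_filter.mp hS').1
    exact h1 (Finset.mem_insert_self a T)
  rw [Finset.powerset_insert, Finset.filter_union, Finset.prod_union disj, Finset.filter_image,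
    Finset.prod_image]
  intro x hx y hy h
  have hax : a ∉ x := fun hh => ha (Finset.mem_powerset.mp (Finset.mem_filter.mp hx).1 hh)
  have hay : a ∉ y := fun hh => ha (Finset.mem_powerset.mp (Finset.mem_filter.mp hy).1 hh)
  rw [← Finset.erase_insert hax, h, Finset.erase_insert hay]

private lemma main_ind (g : ℕ → ℂ) (hg1 : g 1 = 1)
    (hg : ∀ m n : ℕ, Nat.Coprime m n → g (m * n) = g m * g n)
    (hne : ∀ n : ℕ, 1 ≤ n → g n ≠ 0)
    (s : Finset ι) (hs : s.Nonempty) :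
    ∀ (n : ι → ℕ), (∀ i, n i ≠ 0) →
      g (s.lcm n) * ∏ S ∈ s.powerset.filter (fun S => S.Nonempty ∧ Even S.card), g (S.gcd n) =
      ∏ S ∈ s.powerset.filter (fun S => Odd S.card), g (S.gcd n) := by
  induction hs using Finset.Nonempty.cons_induction with
  | singleton a =>
    intro n hn
    have h : ({a} : Finset ι).powerset = {∅, {a}} := by
      rw [show ({a} : Finset ι) = insert a ∅ from rfl, Finset.powerset_insert,
        Finset.powerset_empty]
      ext S; simp
    rw [h]
    simp [Finset.filter_insert, Finset.filter_singleton]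
  | cons a s ha hs ih =>
    intro n hn
    set m := n a with hm
    set n' : ι → ℕ := fun i => Nat.gcd (n i) m with hn'def
    have hn' : ∀ i, n' i ≠ 0 := fun i => Nat.gcd_ne_zero_left (hn i)
    have hL : s.lcm n ≠ 0 := finset_lcm_ne_zero s n hn
    have hL' : s.lcm n' ≠ 0 := finset_lcm_ne_zero s n' hn'
    rw [Finset.cons_eq_insert,
      prod_powerset_insert_filter (fun S => g (S.gcd n)) _ a s ha,
      prod_powerset_insert_filter (fun S => g (S.gcd n)) _ a s ha]
    -- simplify the filter conditions on the "insert" products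
    have hfil1 : s.powerset.filter (fun S => (insert a S).Nonempty ∧ Even (insert a S).card)
        = s.powerset.filter (fun S => Odd S.card) := by
      apply Finset.filter_congr
      intro S hS
      have haS : a ∉ S := fun h => ha (Finset.mem_powerset.mp hS h)
      simp [Finset.card_insert_of_notMem haS, Nat.even_add_one, Nat.not_even_iff_odd]
    have hfil2 : s.powerset.filter (fun S => Odd (insert a S).card)
        = insert ∅ (s.powerset.filter (fun S => S.Nonempty ∧ Even S.card)) := by
      ext S
      simp only [Finset.mem_filter, Finset.mem_insert, Finset.mem_powerset]
      constructor
      · intro ⟨h1, h2⟩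
        rcases S.eq_empty_or_nonempty with rfl | hSne
        · exact Or.inl rfl
        · refine Or.inr ⟨h1, hSne, ?_⟩
          have haS : a ∉ S := fun h => ha (h1 h)
          rw [Finset.card_insert_of_notMem haS, Nat.odd_add_one, Nat.not_odd_iff_even] at h2
          exact h2
      · rintro (rfl | ⟨h1, h2, h3⟩)
        · simp
        · have haS : a ∉ S := fun h => ha (h1 h)
          exact ⟨h1, by rw [Finset.card_insert_of_notMem haS, Nat.odd_add_one,
            Nat.not_odd_iff_even]; exact h3⟩
    rw [hfil1, hfil2, Finset.prod_insert (by simp)]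
    -- rewrite gcds of inserted sets
    have hins : ∀ S ∈ s.powerset, S.Nonempty → (insert a S).gcd n = S.gcd n' := by
      intro S hS hSne
      rw [Finset.gcd_insert, finset_gcd_gcd S hSne n m]
      show Nat.gcd m (S.gcd n) = Nat.gcd (S.gcd n) m
      exact Nat.gcd_comm _ _
    have hconv1 : ∏ S ∈ s.powerset.filter (fun S => Odd S.card), g ((insert a S).gcd n)
        = ∏ S ∈ s.powerset.filter (fun S => Odd S.card), g (S.gcd n') := by
      refine Finset.prod_congr rfl fun S hS => ?_
      obtain ⟨h1, h2⟩ := Finset.mem_filter.mp hS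
      rw [hins S h1 (Finset.card_pos.mp h2.pos)]
    have hconv2 : ∏ S ∈ s.powerset.filter (fun S => S.Nonempty ∧ Even S.card),
          g ((insert a S).gcd n)
        = ∏ S ∈ s.powerset.filter (fun S => S.Nonempty ∧ Even S.card), g (S.gcd n') := by
      refine Finset.prod_congr rfl fun S hS => ?_
      obtain ⟨h1, h2⟩ := Finset.mem_filter.mp hS
      rw [hins S h1 h2.1]
    rw [hconv1, hconv2]
    have hempty : ((insert a (∅ : Finset ι)).gcd n) = m := by
      rw [Finset.gcd_insert, Finset.gcd_empty]
      show Nat.gcd m 0 = m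
      exact Nat.gcd_zero_right m
    rw [hempty]
    -- the key multiplicative identity
    have e1 : g (Nat.lcm m (s.lcm n)) * g (s.lcm n') = g m * g (s.lcm n) := by
      have h := gcd_mul_lcm_g g hg1 hg m (s.lcm n) (hn a) hL
      rwa [Nat.gcd_comm m (s.lcm n), finset_gcd_lcm_distrib s n m hn (hn a), ← hn'def] at h
    have IH1 := ih n hn
    have IH2 := ih n' hn'
    have hgl' : g (s.lcm n') ≠ 0 := hne _ (Nat.one_le_iff_ne_zero.mpr hL')
    have hlcmeq : (insert a s).lcm n = Nat.lcm m (s.lcm n) := by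
      rw [Finset.lcm_insert]; rfl
    rw [hlcmeq]
    apply mul_left_cancel₀ hgl'
    set Pe := ∏ S ∈ s.powerset.filter (fun S => S.Nonempty ∧ Even S.card), g (S.gcd n)
    set Po := ∏ S ∈ s.powerset.filter (fun S => Odd S.card), g (S.gcd n)
    set Pe' := ∏ S ∈ s.powerset.filter (fun S => S.Nonempty ∧ Even S.card), g (S.gcd n')
    set Po' := ∏ S ∈ s.powerset.filter (fun S => Odd S.card), g (S.gcd n')
    linear_combination (Pe * Po') * e1 + (g m * Po') * IH1 - (g m * Po) * IH2

end FinsetLemmas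

/-- **Inclusion-exclusion identity for nonvanishing multiplicative functions.**
If `g : ℕ → ℂ` is multiplicative (`g 1 = 1` and `g (m * n) = g m * g n` whenever
`gcd m n = 1`) and never vanishes on positive integers, `k ≥ 1`, and
`n₁, …, n_k` are positive integers, then
`g (lcm) = ∏_{j=1}^{k} (∏_{1 ≤ i₁ < ⋯ < i_j ≤ k} g (gcd(n_{i₁},…,n_{i_j})))^{(−1)^{j−1}}`,
stated equivalently without inverses as:
`g (lcm) * ∏_{S nonempty, |S| even} g (gcd_{i ∈ S} n_i) = ∏_{S, |S| odd} g (gcd_{i ∈ S} n_i)`. -/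
theorem stmt_1 (g : ℕ → ℂ) (hg1 : g 1 = 1)
    (hg : ∀ m n : ℕ, Nat.Coprime m n → g (m * n) = g m * g n)
    (hne : ∀ n : ℕ, 1 ≤ n → g n ≠ 0)
    (k : ℕ) (hk : 1 ≤ k) (n : Fin k → ℕ) (hn : ∀ i, 1 ≤ n i) :
    g (Finset.univ.lcm n) *
      ∏ S ∈ Finset.univ.powerset.filter
          (fun S : Finset (Fin k) => S.Nonempty ∧ Even S.card), g (S.gcd n) =
    ∏ S ∈ Finset.univ.powerset.filter
          (fun S : Finset (Fin k) => Odd S.card), g (S.gcd n) := by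
  have : NeZero k := ⟨by omega⟩
  exact main_ind g hg1 hg hne Finset.univ Finset.univ_nonempty n
    (fun i => Nat.one_le_iff_ne_zero.mp (hn i))
end

section
/- Let f : ℕ → ℂ be an additive arithmetic function, let k ≥ 1 be an integer and let x ≥ 1 be a real number. Then Σ_{n₁,…,n_k ≤ x} f(gcd(n₁,…,n_k)) = Σ_{p^ν ≤ x, ν ≥ 1} ( f(p^ν) − f(p^{ν−1}) ) · ⌊x/p^ν⌋^k, where the right-hand sum ranges over all prime powers p^ν ≤ x with p prime and ν ≥ 1. -/
private lemma f_one (f : ℕ → ℂ)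
    (hf : ∀ m n : ℕ, Nat.Coprime m n → f (m * n) = f m + f n) : f 1 = 0 := by
  have := hf 1 1 (Nat.coprime_one_left 1)
  simp at this
  linear_combination this

private lemma add_fact (f : ℕ → ℂ)
    (hf : ∀ m n : ℕ, Nat.Coprime m n → f (m * n) = f m + f n) : ∀ n : ℕ, n ≠ 0 →
    f n = ∑ p ∈ n.primeFactors, f (p ^ n.factorization p) := by
  intro n
  induction n using Nat.recOnPosPrimePosCoprime with
  | prime_pow p m hp hm =>
    intro _
    rw [Nat.primeFactors_prime_pow hm.ne' hp]
    simp [hp.factorization_pow]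
  | zero => intro h; exact absurd rfl h
  | one =>
    intro _
    simp [f_one f hf]
  | coprime a b ha hb hab iha ihb =>
    intro _
    have ha0 : a ≠ 0 := by omega
    have hb0 : b ≠ 0 := by omega
    rw [hf a b hab, iha ha0, ihb hb0,
      Nat.primeFactors_mul ha0 hb0,
      Finset.sum_union hab.disjoint_primeFactors]
    congr 1
    · apply Finset.sum_congr rfl
      intro p hp
      have hpb : ¬ p ∣ b := fun hd =>
        (Nat.Prime.one_lt (Nat.prime_of_mem_primeFactors hp)).ne'
          ((Nat.Coprime.coprime_dvd_left (Nat.dvd_of_mem_primeFactors hp) hab).eq_one_of_dvd hd)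
      rw [Nat.factorization_mul ha0 hb0]
      simp [Nat.factorization_eq_zero_of_not_dvd hpb]
    · apply Finset.sum_congr rfl
      intro p hp
      have hpa : ¬ p ∣ a := fun hd =>
        (Nat.Prime.one_lt (Nat.prime_of_mem_primeFactors hp)).ne'
          ((Nat.Coprime.coprime_dvd_left hd hab).eq_one_of_dvd (Nat.dvd_of_mem_primeFactors hp))
      rw [Nat.factorization_mul ha0 hb0]
      simp [Nat.factorization_eq_zero_of_not_dvd hpa]

/-- Key expansion of an additive function over [1, N] as a double sum. -/
private lemma expansion (f : ℕ → ℂ)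
    (hf : ∀ m n : ℕ, Nat.Coprime m n → f (m * n) = f m + f n)
    (N : ℕ) (n : ℕ) (h1 : 1 ≤ n) (h2 : n ≤ N) :
    f n = ∑ p ∈ Finset.Icc 1 N, ∑ ν ∈ Finset.Icc 1 N,
      if p.Prime ∧ p ^ ν ∣ n then f (p ^ ν) - f (p ^ (ν - 1)) else 0 := by
  have hn0 : n ≠ 0 := by omega
  -- inner sum computation for prime p
  have inner : ∀ p : ℕ, p.Prime →
      (∑ ν ∈ Finset.Icc 1 N, if p.Prime ∧ p ^ ν ∣ n then f (p ^ ν) - f (p ^ (ν - 1)) else 0)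
        = f (p ^ n.factorization p) := by
    intro p hp
    set v := n.factorization p with hv
    have hvN : v ≤ N := le_trans (le_of_lt (Nat.factorization_lt p hn0)) h2
    have hfilter :
        Finset.filter (fun ν => p.Prime ∧ p ^ ν ∣ n) (Finset.Icc 1 N)
          = Finset.Icc 1 v := by
      ext ν
      simp only [Finset.mem_filter, Finset.mem_Icc]
      constructor
      · rintro ⟨⟨h1ν, hνN⟩, -, hd⟩
        exact ⟨h1ν, (hp.pow_dvd_iff_le_factorization hn0).mp hd⟩
      · rintro ⟨h1ν, hνv⟩
        exact ⟨⟨h1ν, le_trans hνv hvN⟩, hp,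
          (hp.pow_dvd_iff_le_factorization hn0).mpr hνv⟩
    rw [← Finset.sum_filter, hfilter]
    have hIco : Finset.Icc 1 v = Finset.Ico 1 (v + 1) := by
      rw [Finset.Ico_add_one_right_eq_Icc]
    rw [hIco, Finset.sum_Ico_eq_sum_range]
    have hcongr : ∀ i ∈ Finset.range (v + 1 - 1),
        f (p ^ (1 + i)) - f (p ^ (1 + i - 1)) = f (p ^ (i + 1)) - f (p ^ i) := by
      intro i _
      congr 3 <;> omega
    rw [Finset.sum_congr rfl hcongr]
    have : v + 1 - 1 = v := by omega
    rw [this, Finset.sum_range_sub (fun i => f (p ^ i))]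
    simp [f_one f hf]
  have step1 : ∀ p ∈ Finset.Icc 1 N,
      (∑ ν ∈ Finset.Icc 1 N, if p.Prime ∧ p ^ ν ∣ n then f (p ^ ν) - f (p ^ (ν - 1)) else 0)
        = if p.Prime then f (p ^ n.factorization p) else 0 := by
    intro p _
    by_cases hpp : p.Prime
    · rw [inner p hpp, if_pos hpp]
    · simp [hpp]
  rw [Finset.sum_congr rfl step1, add_fact f hf n hn0]
  have hsub : n.primeFactors ⊆ Finset.Icc 1 N := by
    intro p hp
    have hd := Nat.dvd_of_mem_primeFactors hp
    have := Nat.le_of_dvd (by omega) hd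
    have := (Nat.prime_of_mem_primeFactors hp).one_lt
    simp only [Finset.mem_Icc]
    omega
  rw [← Finset.sum_subset hsub ?_]
  · apply Finset.sum_congr rfl
    intro p hp
    rw [if_pos (Nat.prime_of_mem_primeFactors hp)]
  · intro p _ hpn
    by_cases hpp : p.Prime
    · rw [if_pos hpp]
      have : ¬ p ∣ n := fun hd => hpn (Nat.mem_primeFactors.mpr ⟨hpp, hd, hn0⟩)
      rw [Nat.factorization_eq_zero_of_not_dvd this]
      simpa using f_one f hf
    · rw [if_neg hpp]

/-- For an additive function `f : ℕ → ℂ`, integer `k ≥ 1` and real `x ≥ 1`: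
`Σ_{n₁,…,n_k ≤ x} f (gcd (n₁,…,n_k))
  = Σ_{p^ν ≤ x, p prime, ν ≥ 1} (f (p^ν) − f (p^{ν−1})) ⌊x / p^ν⌋^k`.
(The ranges `p, ν ∈ [1, ⌊x⌋]` are harmless: any prime power `p^ν ≤ x` has
`p ≤ x` and `ν < 2^ν ≤ p^ν ≤ x`.) -/
theorem stmt_3 (f : ℕ → ℂ)
    (hf : ∀ m n : ℕ, Nat.Coprime m n → f (m * n) = f m + f n)
    (k : ℕ) (hk : 1 ≤ k) (x : ℝ) (hx : 1 ≤ x) :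
    ∑ n ∈ Fintype.piFinset (fun _ : Fin k => Finset.Icc 1 ⌊x⌋₊),
        f (Finset.univ.gcd n) =
      ∑ p ∈ Finset.Icc 1 ⌊x⌋₊, ∑ ν ∈ Finset.Icc 1 ⌊x⌋₊,
        if p.Prime ∧ ((p : ℝ) ^ ν ≤ x) then
          (f (p ^ ν) - f (p ^ (ν - 1))) * (⌊x / (p : ℝ) ^ ν⌋₊ : ℂ) ^ k
        else 0 := by
  set N := ⌊x⌋₊ with hN
  have hx0 : (0:ℝ) ≤ x := le_trans zero_le_one hx
  have hN1 : 1 ≤ N := Nat.le_floor (by exact_mod_cast hx)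
  -- gcd of each tuple is in [1, N]
  have hgcd : ∀ n ∈ Fintype.piFinset (fun _ : Fin k => Finset.Icc 1 N),
      1 ≤ Finset.univ.gcd n ∧ Finset.univ.gcd n ≤ N := by
    intro n hn
    rw [Fintype.mem_piFinset] at hn
    have i0 : Fin k := ⟨0, hk⟩
    have hmem := hn i0
    rw [Finset.mem_Icc] at hmem
    have hd : Finset.univ.gcd n ∣ n i0 := Finset.gcd_dvd (Finset.mem_univ i0)
    have hpos : 0 < n i0 := hmem.1
    constructor
    · rcases Nat.eq_zero_or_pos (Finset.univ.gcd n) with h | h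
      · rw [h] at hd; omega
      · exact h
    · exact le_trans (Nat.le_of_dvd hpos hd) hmem.2
  rw [Finset.sum_congr rfl (fun n hn => expansion f hf N _ (hgcd n hn).1 (hgcd n hn).2)]
  rw [Finset.sum_comm]
  refine Finset.sum_congr rfl (fun p _ => ?_)
  rw [Finset.sum_comm]
  refine Finset.sum_congr rfl (fun ν hν => ?_)
  rw [Finset.mem_Icc] at hν
  by_cases hpp : p.Prime
  swap
  · simp [hpp]
  -- p is prime
  set c : ℂ := f (p ^ ν) - f (p ^ (ν - 1)) with hc
  set m : ℕ := p ^ ν with hm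
  have hm1 : 1 ≤ m := Nat.one_le_iff_ne_zero.mpr (pow_ne_zero _ hpp.pos.ne')
  -- condition rewrite
  have hcond : ∀ n : Fin k → ℕ, (p.Prime ∧ m ∣ Finset.univ.gcd n) ↔ (∀ i, m ∣ n i) := by
    intro n
    rw [Finset.dvd_gcd_iff]
    simp [hpp]
  -- count of multiples
  have hcount : (∑ j ∈ Finset.Icc 1 N, if m ∣ j then (1:ℂ) else 0) = ((N / m : ℕ) : ℂ) := by
    rw [Finset.sum_boole]
    norm_cast
    have : Finset.Icc 1 N = Finset.Ioc 0 N := by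
      rw [← Finset.Icc_add_one_left_eq_Ioc]; rfl
    rw [this, Nat.Ioc_filter_dvd_card_eq_div]
  have key : (∑ n ∈ Fintype.piFinset (fun _ : Fin k => Finset.Icc 1 N),
      if p.Prime ∧ m ∣ Finset.univ.gcd n then c else 0) = c * ((N / m : ℕ) : ℂ) ^ k := by
    have h1 : ∀ n : Fin k → ℕ,
        (if p.Prime ∧ m ∣ Finset.univ.gcd n then c else 0)
          = c * ∏ i, (if m ∣ n i then (1:ℂ) else 0) := by
      intro n
      by_cases h : ∀ i, m ∣ n i
      · rw [if_pos ((hcond n).mpr h)]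
        rw [Finset.prod_congr rfl (fun i _ => if_pos (h i))]
        simp
      · rw [if_neg (fun hh => h ((hcond n).mp hh))]
        obtain ⟨i, hi⟩ := not_forall.mp h
        rw [Finset.prod_eq_zero (f := fun i => if m ∣ n i then (1:ℂ) else 0) (Finset.mem_univ i) (if_neg hi)]
        simp
    rw [Finset.sum_congr rfl (fun n _ => h1 n), ← Finset.mul_sum,
      ← Finset.prod_univ_sum (fun _ : Fin k => Finset.Icc 1 N)
        (fun _ j => if m ∣ j then (1:ℂ) else 0)]
    rw [Finset.prod_congr rfl (fun i _ => hcount), Finset.prod_const]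
    simp
  rw [key]
  -- floor rewrite
  have hfloor : ⌊x / (p:ℝ) ^ ν⌋₊ = N / m := by
    have : ((p:ℝ)) ^ ν = ((m : ℕ) : ℝ) := by push_cast [hm]; ring
    rw [this, Nat.floor_div_natCast]
  by_cases hle : (p:ℝ) ^ ν ≤ x
  · rw [if_pos ⟨hpp, hle⟩, hfloor]
  · rw [if_neg (fun h => hle h.2)]
    have hlt : N < m := by
      by_contra h
      push_neg at h
      apply hle
      calc ((p:ℝ)) ^ ν = ((m : ℕ) : ℝ) := by push_cast [hm]; ring
        _ ≤ (N : ℝ) := by exact_mod_cast h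
        _ ≤ x := Nat.floor_le hx0
    rw [Nat.div_eq_of_lt hlt]
    rw [Nat.cast_zero, zero_pow (by omega : k ≠ 0), mul_zero]
end

section
/- Let ℓ ≥ 1 be a fixed integer. Then there exist constants C > 0 and x₀ ≥ 3 such that for all real x ≥ x₀: Σ_{p ≤ x^{1/2}} Σ_{ν > log x / log p} ν^ℓ / p^{ν} ≤ C / ( x^{1/2} (log x)² ), where the outer sum ranges over primes p ≤ √x and the inner sum over integers ν > log x / log p. -/
open Real Finset

/-- `ν^l * (2^{-1/24})^ν` is uniformly bounded. -/
lemma stmt7_aux (l : ℕ) (ν : ℕ) :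
    (ν : ℝ) ^ l * ((2:ℝ) ^ (-(1/24) : ℝ)) ^ ν ≤ (l.factorial : ℝ) * (24 / Real.log 2) ^ l := by
  have hlog2 : 0 < Real.log 2 := Real.log_pos one_lt_two
  set t : ℝ := (ν : ℝ) * Real.log 2 / 24 with ht
  have ht0 : 0 ≤ t := by positivity
  have h1 : t ^ l / l.factorial ≤ Real.exp t := by
    calc t ^ l / l.factorial
        ≤ ∑ i ∈ Finset.range (l + 1), t ^ i / i.factorial :=
          Finset.single_le_sum (f := fun i => t ^ i / (i.factorial : ℝ))
            (fun i _ => by positivity) (Finset.self_mem_range_succ l)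
      _ ≤ Real.exp t := Real.sum_le_exp_of_nonneg ht0 _
  have h2 : t ^ l ≤ Real.exp t * l.factorial := by
    rw [div_le_iff₀ (by positivity)] at h1; exact h1
  have h3 : t ^ l * Real.exp (-t) ≤ l.factorial := by
    have := mul_le_mul_of_nonneg_right h2 (Real.exp_nonneg (-t))
    rwa [mul_right_comm, ← Real.exp_add, add_neg_cancel, Real.exp_zero, one_mul] at this
  have hrpow : ((2:ℝ) ^ (-(1/24) : ℝ)) ^ ν = Real.exp (-t) := by
    rw [Real.rpow_def_of_pos two_pos, ← Real.exp_nat_mul]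
    rw [ht]
    congr 1
    ring
  have hν : (ν : ℝ) ^ l = (24 / Real.log 2) ^ l * t ^ l := by
    rw [← mul_pow]
    congr 1
    rw [ht]; field_simp
  calc (ν : ℝ) ^ l * ((2:ℝ) ^ (-(1/24) : ℝ)) ^ ν
      = (24 / Real.log 2) ^ l * (t ^ l * Real.exp (-t)) := by rw [hν, hrpow]; ring
    _ ≤ (24 / Real.log 2) ^ l * l.factorial := by
        exact mul_le_mul_of_nonneg_left h3 (by positivity)
    _ = (l.factorial : ℝ) * (24 / Real.log 2) ^ l := mul_comm _ _

/-- For a fixed integer `ℓ ≥ 1` there are `C > 0` and `x₀ ≥ 3` such that for all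
`x ≥ x₀`: `Σ_{p ≤ √x} Σ_{ν > log x / log p} ν^ℓ / p^ν ≤ C / (x^{1/2} (log x)²)`,
the outer sum over primes `p ≤ √x`, the inner over integers `ν > log x / log p`. -/
theorem stmt_7 (l : ℕ) (hl : 1 ≤ l) :
    ∃ C > (0 : ℝ), ∃ x₀ : ℝ, 3 ≤ x₀ ∧ ∀ x ≥ x₀,
      ∑ p ∈ Finset.filter Nat.Prime (Finset.Icc 1 ⌊Real.sqrt x⌋₊),
        (∑' ν : ℕ, if Real.log x / Real.log p < (ν : ℝ) then
            (ν : ℝ) ^ l / (p : ℝ) ^ ν else 0) ≤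
        C / (Real.sqrt x * (Real.log x) ^ 2) := by
  set r : ℝ := (2:ℝ) ^ (-(1/24) : ℝ) with hr
  have hr0 : 0 < r := Real.rpow_pos_of_pos two_pos _
  have hr1 : r < 1 := Real.rpow_lt_one_of_one_lt_of_neg one_lt_two (by norm_num)
  set K : ℝ := (l.factorial : ℝ) * (24 / Real.log 2) ^ l with hK
  have hlog2 : 0 < Real.log 2 := Real.log_pos one_lt_two
  have hK0 : 0 < K :=
    mul_pos (by exact_mod_cast l.factorial_pos) (pow_pos (by positivity) l)
  have hA : Summable (fun n : ℕ => (n : ℝ) ^ (-(9/8) : ℝ)) :=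
    Real.summable_nat_rpow.2 (by norm_num)
  set A : ℝ := ∑' n : ℕ, (n : ℝ) ^ (-(9/8) : ℝ) with hAdef
  have hAnn : 0 ≤ A := tsum_nonneg fun n => Real.rpow_nonneg (Nat.cast_nonneg n) _
  set B : ℝ := K * (1 - r)⁻¹ * A with hB
  have hBnn : 0 ≤ B :=
    mul_nonneg (mul_nonneg hK0.le (inv_nonneg.2 (by linarith))) hAnn
  refine ⟨B + 1, by linarith, (96:ℝ) ^ 96, by norm_num, fun x hx => ?_⟩
  have hx3 : (3:ℝ) ≤ x := le_trans (by norm_num) hx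
  have hx0 : (0:ℝ) < x := by linarith
  have hx1 : (1:ℝ) < x := by linarith
  have hlogx : 0 < Real.log x := Real.log_pos hx1
  -- inner bound
  have inner : ∀ p ∈ Finset.filter Nat.Prime (Finset.Icc 1 ⌊Real.sqrt x⌋₊),
      (∑' ν : ℕ, if Real.log x / Real.log p < (ν : ℝ) then
          (ν : ℝ) ^ l / (p : ℝ) ^ ν else 0) ≤
      (K * x ^ (-(13/24) : ℝ) * (1 - r)⁻¹) * (p : ℝ) ^ (-(9/8) : ℝ) := by
    intro p hp
    rw [Finset.mem_filter, Finset.mem_Icc] at hp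
    obtain ⟨⟨-, hple⟩, hprime⟩ := hp
    have hq2 : (2:ℝ) ≤ (p:ℝ) := by exact_mod_cast hprime.two_le
    have hq0 : (0:ℝ) < (p:ℝ) := by linarith
    have hq1 : (1:ℝ) < (p:ℝ) := by linarith
    have hqsqrt : (p:ℝ) ≤ Real.sqrt x :=
      le_trans (by exact_mod_cast hple) (Nat.floor_le (Real.sqrt_nonneg x))
    have hlogq : 0 < Real.log p := Real.log_pos hq1
    have hterm : ∀ ν : ℕ, (if Real.log x / Real.log p < (ν : ℝ) then
        (ν : ℝ) ^ l / (p : ℝ) ^ ν else 0) ≤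
        (K * x ^ (-(13/24) : ℝ) * (p : ℝ) ^ (-(9/8) : ℝ)) * r ^ ν := by
      intro ν
      have hRnn : 0 ≤ (K * x ^ (-(13/24) : ℝ) * (p : ℝ) ^ (-(9/8) : ℝ)) * r ^ ν := by
        have := Real.rpow_nonneg hx0.le (-(13/24) : ℝ)
        have := Real.rpow_nonneg hq0.le (-(9/8) : ℝ)
        positivity
      split_ifs with hcond
      · -- derive ν ≥ 3 and x < p^ν
        have hν3 : 3 ≤ ν := by
          have hsq : Real.log p ≤ Real.log x / 2 := by
            have := Real.log_le_log hq0 hqsqrt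
            rwa [Real.log_sqrt hx0.le] at this
          have h2' : (2:ℝ) ≤ Real.log x / Real.log p := by
            rw [le_div_iff₀ hlogq]; linarith
          have : (2:ℝ) < (ν : ℝ) := lt_of_le_of_lt h2' hcond
          exact_mod_cast Nat.succ_le_of_lt (by exact_mod_cast this : 2 < ν)
        have hxQ : x < (p:ℝ) ^ ν := by
          have h1 : Real.log x < (ν:ℝ) * Real.log p := (div_lt_iff₀ hlogq).1 hcond
          have h2' : Real.log x < Real.log ((p:ℝ) ^ ν) := by rw [Real.log_pow]; exact h1
          exact (Real.log_lt_log_iff hx0 (pow_pos hq0 ν)).1 h2'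
        set Q : ℝ := (p:ℝ) ^ ν with hQdef
        have hQ0 : (0:ℝ) < Q := pow_pos hq0 ν
        have h2Q : (2:ℝ) ^ ν ≤ Q := pow_le_pow_left₀ (by norm_num) hq2 ν
        have hq3Q : (p:ℝ) ^ (3:ℕ) ≤ Q := pow_le_pow_right₀ hq1.le hν3
        -- factor identity
        have hsplit : (ν : ℝ) ^ l / Q =
            ((ν:ℝ) ^ l * Q ^ (-(1/24) : ℝ)) * Q ^ (-(13/24) : ℝ) * Q ^ (-(3/8) : ℝ)
              * Q ^ (-(1/24) : ℝ) := by
          have hsum : Q ^ (-(1:ℝ)) =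
              Q ^ (-(1/24) : ℝ) * Q ^ (-(13/24) : ℝ) * Q ^ (-(3/8) : ℝ) * Q ^ (-(1/24) : ℝ) := by
            rw [← Real.rpow_add hQ0, ← Real.rpow_add hQ0, ← Real.rpow_add hQ0]
            norm_num
          rw [div_eq_mul_inv, ← Real.rpow_neg_one Q, hsum]; ring
        have hQ2 : Q ^ (-(1/24) : ℝ) ≤ r ^ ν := by
          have h1 : Q ^ (-(1/24) : ℝ) ≤ ((2:ℝ) ^ ν) ^ (-(1/24) : ℝ) :=
            Real.rpow_le_rpow_of_nonpos (by positivity) h2Q (by norm_num)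
          have h2' : ((2:ℝ) ^ ν) ^ (-(1/24) : ℝ) = r ^ ν := by
            rw [← Real.rpow_natCast (2:ℝ) ν, ← Real.rpow_mul (by norm_num),
              ← Real.rpow_natCast r ν, hr, ← Real.rpow_mul (by norm_num)]
            ring_nf
          rwa [h2'] at h1
        have a1 : (ν:ℝ) ^ l * Q ^ (-(1/24) : ℝ) ≤ K := by
          calc (ν:ℝ) ^ l * Q ^ (-(1/24) : ℝ) ≤ (ν:ℝ) ^ l * r ^ ν :=
                mul_le_mul_of_nonneg_left hQ2 (by positivity)
            _ ≤ K := stmt7_aux l ν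
        have a2 : Q ^ (-(13/24) : ℝ) ≤ x ^ (-(13/24) : ℝ) :=
          Real.rpow_le_rpow_of_nonpos hx0 hxQ.le (by norm_num)
        have a3 : Q ^ (-(3/8) : ℝ) ≤ (p:ℝ) ^ (-(9/8) : ℝ) := by
          have h1 : Q ^ (-(3/8) : ℝ) ≤ ((p:ℝ) ^ (3:ℕ)) ^ (-(3/8) : ℝ) :=
            Real.rpow_le_rpow_of_nonpos (by positivity) hq3Q (by norm_num)
          have h2' : ((p:ℝ) ^ (3:ℕ)) ^ (-(3/8) : ℝ) = (p:ℝ) ^ (-(9/8) : ℝ) := by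
            rw [← Real.rpow_natCast (p:ℝ) 3, ← Real.rpow_mul hq0.le]
            norm_num
          rwa [h2'] at h1
        calc (ν : ℝ) ^ l / (p:ℝ) ^ ν
            = ((ν:ℝ) ^ l * Q ^ (-(1/24) : ℝ)) * Q ^ (-(13/24) : ℝ) * Q ^ (-(3/8) : ℝ)
              * Q ^ (-(1/24) : ℝ) := hsplit
          _ ≤ K * x ^ (-(13/24) : ℝ) * (p:ℝ) ^ (-(9/8) : ℝ) * r ^ ν := by
              have n1 : 0 ≤ Q ^ (-(13/24) : ℝ) := Real.rpow_nonneg hQ0.le _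
              have n2 : 0 ≤ Q ^ (-(3/8) : ℝ) := Real.rpow_nonneg hQ0.le _
              have n3 : 0 ≤ Q ^ (-(1/24) : ℝ) := Real.rpow_nonneg hQ0.le _
              have n4 : 0 ≤ x ^ (-(13/24) : ℝ) := Real.rpow_nonneg hx0.le _
              have n5 : 0 ≤ (p:ℝ) ^ (-(9/8) : ℝ) := Real.rpow_nonneg hq0.le _
              exact mul_le_mul (mul_le_mul (mul_le_mul a1 a2 n1 hK0.le) a3 n2
                (by positivity)) hQ2 n3 (by positivity)
      · exact hRnn
    have hgsum : Summable (fun ν : ℕ =>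
        (K * x ^ (-(13/24) : ℝ) * (p : ℝ) ^ (-(9/8) : ℝ)) * r ^ ν) :=
      (summable_geometric_of_lt_one hr0.le hr1).mul_left _
    have hfsum : Summable (fun ν : ℕ => if Real.log x / Real.log p < (ν : ℝ) then
        (ν : ℝ) ^ l / (p : ℝ) ^ ν else 0) := by
      refine Summable.of_nonneg_of_le (fun ν => ?_) hterm hgsum
      split_ifs
      · positivity
      · exact le_refl 0
    calc (∑' ν : ℕ, if Real.log x / Real.log p < (ν : ℝ) then
          (ν : ℝ) ^ l / (p : ℝ) ^ ν else 0)
        ≤ ∑' ν : ℕ, (K * x ^ (-(13/24) : ℝ) * (p : ℝ) ^ (-(9/8) : ℝ)) * r ^ ν :=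
          Summable.tsum_le_tsum hterm hfsum hgsum
      _ = (K * x ^ (-(13/24) : ℝ) * (p : ℝ) ^ (-(9/8) : ℝ)) * (1 - r)⁻¹ := by
          rw [tsum_mul_left, tsum_geometric_of_lt_one hr0.le hr1]
      _ = (K * x ^ (-(13/24) : ℝ) * (1 - r)⁻¹) * (p : ℝ) ^ (-(9/8) : ℝ) := by ring
  -- outer bound
  have hfac : 0 ≤ K * x ^ (-(13/24) : ℝ) * (1 - r)⁻¹ := by
    have := Real.rpow_nonneg hx0.le (-(13/24) : ℝ)
    have : (0:ℝ) ≤ (1 - r)⁻¹ := inv_nonneg.2 (by linarith)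
    positivity
  have hden : 0 < Real.sqrt x * (Real.log x) ^ 2 :=
    mul_pos (Real.sqrt_pos.2 hx0) (pow_pos hlogx 2)
  have hkey : Real.sqrt x * (Real.log x) ^ 2 ≤ x ^ ((13:ℝ)/24) := by
    have h1 : Real.log x ≤ 96 * x ^ ((1:ℝ)/96) := by
      have h := Real.log_le_rpow_div hx0.le (by norm_num : (0:ℝ) < 1/96)
      have e : x ^ ((1:ℝ)/96) / (1/96) = 96 * x ^ ((1:ℝ)/96) := by ring
      rw [show ((1:ℝ)/96 : ℝ) = (1/96 : ℝ) by norm_num] at h ⊢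
      linarith [e ▸ h]
    have h96 : (9216:ℝ) ≤ x ^ ((1:ℝ)/48) := by
      have h0 : ((96:ℝ) ^ 96) ^ ((1:ℝ)/48) ≤ x ^ ((1:ℝ)/48) :=
        Real.rpow_le_rpow (by positivity) hx (by norm_num)
      have h2 : ((96:ℝ) ^ 96) ^ ((1:ℝ)/48) = 9216 := by
        rw [← Real.rpow_natCast (96:ℝ) 96, ← Real.rpow_mul (by norm_num)]
        norm_num
      linarith
    have h2 : (Real.log x) ^ 2 ≤ 9216 * x ^ ((1:ℝ)/48) := by
      have hm := mul_le_mul h1 h1 hlogx.le (by positivity)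
      calc (Real.log x) ^ 2 = Real.log x * Real.log x := pow_two _
        _ ≤ (96 * x ^ ((1:ℝ)/96)) * (96 * x ^ ((1:ℝ)/96)) := hm
        _ = 9216 * (x ^ ((1:ℝ)/96) * x ^ ((1:ℝ)/96)) := by ring
        _ = 9216 * x ^ ((1:ℝ)/48) := by
            rw [← Real.rpow_add hx0]; norm_num
    calc Real.sqrt x * (Real.log x) ^ 2
        ≤ x ^ ((1:ℝ)/2) * (9216 * x ^ ((1:ℝ)/48)) := by
          rw [Real.sqrt_eq_rpow]
          exact mul_le_mul_of_nonneg_left h2 (Real.rpow_nonneg hx0.le _)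
      _ = 9216 * (x ^ ((1:ℝ)/2) * x ^ ((1:ℝ)/48)) := by ring
      _ ≤ x ^ ((1:ℝ)/48) * (x ^ ((1:ℝ)/2) * x ^ ((1:ℝ)/48)) := by
          refine mul_le_mul_of_nonneg_right h96 ?_
          exact mul_nonneg (Real.rpow_nonneg hx0.le _) (Real.rpow_nonneg hx0.le _)
      _ = x ^ ((13:ℝ)/24) := by
          rw [← Real.rpow_add hx0, ← Real.rpow_add hx0]; norm_num
  calc ∑ p ∈ Finset.filter Nat.Prime (Finset.Icc 1 ⌊Real.sqrt x⌋₊),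
        (∑' ν : ℕ, if Real.log x / Real.log p < (ν : ℝ) then
            (ν : ℝ) ^ l / (p : ℝ) ^ ν else 0)
      ≤ ∑ p ∈ Finset.filter Nat.Prime (Finset.Icc 1 ⌊Real.sqrt x⌋₊),
        (K * x ^ (-(13/24) : ℝ) * (1 - r)⁻¹) * (p : ℝ) ^ (-(9/8) : ℝ) :=
        Finset.sum_le_sum inner
    _ = (K * x ^ (-(13/24) : ℝ) * (1 - r)⁻¹) *
        ∑ p ∈ Finset.filter Nat.Prime (Finset.Icc 1 ⌊Real.sqrt x⌋₊), (p : ℝ) ^ (-(9/8) : ℝ) :=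
        (Finset.mul_sum _ _ _).symm
    _ ≤ (K * x ^ (-(13/24) : ℝ) * (1 - r)⁻¹) * A := by
        refine mul_le_mul_of_nonneg_left ?_ hfac
        exact Summable.sum_le_tsum _ (fun i _ => Real.rpow_nonneg (Nat.cast_nonneg i) _) hA
    _ = B * x ^ (-(13/24) : ℝ) := by rw [hB]; ring
    _ = B / x ^ ((13:ℝ)/24) := by
        rw [show (-(13/24) : ℝ) = -((13:ℝ)/24) by norm_num, Real.rpow_neg hx0.le]
        exact (div_eq_mul_inv _ _).symm
    _ ≤ (B + 1) / (Real.sqrt x * (Real.log x) ^ 2) :=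
        div_le_div₀ (by linarith) (by linarith) hden hkey
end
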